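/- arXiv:2505.16958 — 2 statements merged into one kernel-verified Lean document; each statement's English description precedes it below -/
import Mathlib

section
/- Let r ≥ 1 and let P : ℤ^r → ℂ be the symbol of a Fourier multiplier on the torus 𝕋^r. Then the following are equivalent: (i) for every u : ℤ^r → ℂ of polynomial growth such that ξ ↦ P(ξ)u(ξ) is rapidly decreasing, u is itself rapidly decreasing; (ii) there exist C > 0, k ∈ ℝ and a finite set F ⊆ ℤ^r such that |P(ξ)| ≥ C(1+‖ξ‖²)^{k/2} for all ξ ∈ ℤ^r \ F. -/
noncomputable section

open scoped BigOperators

/-- The weight `1 + ‖ξ‖²` for a frequency `ξ ∈ ℤ^r`. -/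
def wt {r : ℕ} (ξ : Fin r → ℤ) : ℝ :=
  1 + ∑ i, ((ξ i : ℝ)) ^ 2

/-- A scalar sequence indexed by `ℤ^r` is rapidly decreasing. -/
def RapidDecayC {r : ℕ} (u : (Fin r → ℤ) → ℂ) : Prop :=
  ∀ M : ℝ, 0 < M → ∃ C : ℝ, 0 < C ∧ ∀ ξ, ‖u ξ‖ ≤ C * wt ξ ^ (-(M / 2))

/-- A scalar sequence indexed by `ℤ^r` has polynomial growth. -/
def PolyGrowthC {r : ℕ} (u : (Fin r → ℤ) → ℂ) : Prop :=
  ∃ C N : ℝ, 0 < C ∧ 0 < N ∧ ∀ ξ, ‖u ξ‖ ≤ C * wt ξ ^ (N / 2)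

lemma one_le_wt {r : ℕ} (ξ : Fin r → ℤ) : 1 ≤ wt ξ := by
  have : 0 ≤ ∑ i, ((ξ i : ℝ))^2 := Finset.sum_nonneg fun i _ => sq_nonneg _
  unfold wt; linarith

lemma wt_pos {r : ℕ} (ξ : Fin r → ℤ) : 0 < wt ξ := lt_of_lt_of_le one_pos (one_le_wt ξ)

lemma wt_rpow_le {r : ℕ} (ξ : Fin r → ℤ) {a b : ℝ} (h : a ≤ b) :
    wt ξ ^ a ≤ wt ξ ^ b := Real.rpow_le_rpow_of_exponent_le (one_le_wt ξ) h

lemma wt_finite {r : ℕ} (n : ℝ) : {ξ : Fin r → ℤ | wt ξ ≤ n}.Finite := by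
  have hsub : {ξ : Fin r → ℤ | wt ξ ≤ n} ⊆
      Set.pi Set.univ (fun _ => Set.Icc (-(⌈n⌉₊ : ℤ)) (⌈n⌉₊ : ℤ)) := by
    intro ξ hξ i _
    have hw : wt ξ ≤ n := hξ
    have h1 : ((ξ i : ℝ))^2 ≤ n := by
      have hs : ((ξ i : ℝ))^2 ≤ ∑ j, ((ξ j : ℝ))^2 := by
        simpa using Finset.single_le_sum (f := fun j => ((ξ j : ℝ))^2)
          (fun j _ => sq_nonneg _) (Finset.mem_univ i)
      unfold wt at hw; linarith
    have h2 : (|ξ i| : ℝ) ≤ ((ξ i : ℝ))^2 := by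
      rcases eq_or_ne (ξ i) 0 with h | h
      · simp [h]
      · have h1' : (1:ℝ) ≤ |((ξ i : ℤ) : ℝ)| := by
          have := Int.one_le_abs h
          exact_mod_cast this
        nlinarith [sq_abs ((ξ i : ℤ) : ℝ), abs_nonneg ((ξ i : ℤ) : ℝ)]
    have h3 : (|ξ i| : ℝ) ≤ (⌈n⌉₊ : ℝ) := le_trans h2 (le_trans h1 (Nat.le_ceil n))
    have habs : |ξ i| ≤ (⌈n⌉₊ : ℤ) := by exact_mod_cast h3
    constructor
    · linarith [neg_abs_le (ξ i)]
    · linarith [le_abs_self (ξ i)]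
  exact Set.Finite.subset (Set.Finite.pi (fun _ => Set.finite_Icc _ _)) hsub

theorem scalar_multiplier_GH_iff (r : ℕ) (hr : 1 ≤ r)
    (P : (Fin r → ℤ) → ℂ) :
    (∀ u : (Fin r → ℤ) → ℂ, PolyGrowthC u →
        RapidDecayC (fun ξ => P ξ * u ξ) → RapidDecayC u) ↔
      (∃ (C : ℝ) (k : ℝ) (F : Set (Fin r → ℤ)), 0 < C ∧ F.Finite ∧
        ∀ ξ, ξ ∉ F → ‖P ξ‖ ≥ C * wt ξ ^ (k / 2)) := by
  constructor
  · -- (i) → (ii), by contradiction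
    intro h
    by_contra hne
    push_neg at hne
    -- for each n pick a bad frequency
    have key : ∀ n : ℕ, ∃ ξ : Fin r → ℤ,
        (n : ℝ) < wt ξ ∧ ‖P ξ‖ < wt ξ ^ (-(n : ℝ) / 2) := by
      intro n
      obtain ⟨ξ, hξF, hξP⟩ := hne 1 (-(n : ℝ)) {ξ | wt ξ ≤ (n : ℝ)} one_pos (wt_finite n)
      refine ⟨ξ, ?_, ?_⟩
      · exact lt_of_not_ge hξF
      · simpa using hξP
    choose g hg1 hg2 using key
    classical
    set S : Set (Fin r → ℤ) := Set.range g with hS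
    set u : (Fin r → ℤ) → ℂ := S.indicator (fun _ => (1 : ℂ)) with hu
    have hunorm : ∀ ζ, ‖u ζ‖ ≤ 1 := by
      intro ζ
      by_cases hζ : ζ ∈ S <;> simp [hu, hζ]
    have hpoly : PolyGrowthC u := by
      refine ⟨1, 1, one_pos, one_pos, fun ξ => ?_⟩
      have h1 : (1:ℝ) ≤ wt ξ ^ ((1:ℝ)/2) := by
        have := wt_rpow_le ξ (show (0:ℝ) ≤ 1/2 by norm_num)
        rwa [Real.rpow_zero] at this
      have := hunorm ξ
      nlinarith
    have hPu : RapidDecayC (fun ξ => P ξ * u ξ) := by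
      intro M hM
      set n₀ := ⌈M⌉₊ with hn₀
      refine ⟨1 + ∑ n ∈ Finset.range n₀, ‖P (g n)‖ * wt (g n) ^ (M / 2), ?_, ?_⟩
      · have : 0 ≤ ∑ n ∈ Finset.range n₀, ‖P (g n)‖ * wt (g n) ^ (M / 2) :=
          Finset.sum_nonneg fun n _ =>
            mul_nonneg (norm_nonneg _) (Real.rpow_nonneg (wt_pos _).le _)
        linarith
      · intro ζ
        set C := 1 + ∑ n ∈ Finset.range n₀, ‖P (g n)‖ * wt (g n) ^ (M / 2) with hC
        have hCsum : 0 ≤ ∑ n ∈ Finset.range n₀, ‖P (g n)‖ * wt (g n) ^ (M / 2) :=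
          Finset.sum_nonneg fun n _ =>
            mul_nonneg (norm_nonneg _) (Real.rpow_nonneg (wt_pos _).le _)
        have hwpos : (0:ℝ) < wt ζ ^ (-(M / 2)) := Real.rpow_pos_of_pos (wt_pos ζ) _
        by_cases hζ : ζ ∈ S
        · obtain ⟨n, rfl⟩ := hζ
          have huval : u (g n) = 1 := by simp [hu, hS]
          have hnorm : ‖P (g n) * u (g n)‖ = ‖P (g n)‖ := by
            rw [huval, mul_one]
          rw [hnorm]
          by_cases hn : n₀ ≤ n
          · have h1 : ‖P (g n)‖ < wt (g n) ^ (-(n : ℝ) / 2) := hg2 n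
            have h2 : wt (g n) ^ (-(n : ℝ) / 2) ≤ wt (g n) ^ (-(M / 2)) := by
              apply wt_rpow_le
              have : M ≤ (n : ℝ) := le_trans (Nat.le_ceil M) (by exact_mod_cast hn)
              linarith
            have hC1 : (1:ℝ) ≤ C := by rw [hC]; linarith
            calc ‖P (g n)‖ ≤ wt (g n) ^ (-(M / 2)) := le_trans h1.le h2
              _ = 1 * wt (g n) ^ (-(M / 2)) := (one_mul _).symm
              _ ≤ C * wt (g n) ^ (-(M / 2)) := by
                  apply mul_le_mul_of_nonneg_right hC1 (Real.rpow_pos_of_pos (wt_pos _) _).le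
          · push_neg at hn
            have hterm : ‖P (g n)‖ * wt (g n) ^ (M / 2) ≤
                ∑ m ∈ Finset.range n₀, ‖P (g m)‖ * wt (g m) ^ (M / 2) :=
              Finset.single_le_sum (f := fun m => ‖P (g m)‖ * wt (g m) ^ (M / 2))
                (fun m _ => mul_nonneg (norm_nonneg _) (Real.rpow_nonneg (wt_pos _).le _))
                (Finset.mem_range.mpr hn)
            have hmul : wt (g n) ^ (M / 2) * wt (g n) ^ (-(M / 2)) = 1 := by
              rw [← Real.rpow_add (wt_pos _)]
              simp
            have : ‖P (g n)‖ = (‖P (g n)‖ * wt (g n) ^ (M / 2)) * wt (g n) ^ (-(M / 2)) := by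
              rw [mul_assoc, hmul, mul_one]
            rw [this]
            apply mul_le_mul_of_nonneg_right _ (Real.rpow_pos_of_pos (wt_pos _) _).le
            rw [hC]; linarith
        · have huval : u ζ = 0 := by simp [hu, hζ]
          simp only [huval, mul_zero, norm_zero]
          have hC1 : (1:ℝ) ≤ C := by rw [hC]; linarith
          exact le_of_lt (mul_pos (lt_of_lt_of_le one_pos hC1) hwpos)
    have hrap : RapidDecayC u := h u hpoly hPu
    obtain ⟨C, hCpos, hb⟩ := hrap 1 one_pos
    -- contradiction at n ≥ C²
    set n := ⌈C ^ 2⌉₊ with hn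
    have hval : ‖u (g n)‖ = 1 := by simp [hu, hS]
    have hle := hb (g n)
    rw [hval] at hle
    have hw := hg1 n
    have hwgt : C ^ 2 < wt (g n) := lt_of_le_of_lt (Nat.le_ceil _) hw
    have hx : wt (g n) ^ ((1:ℝ)/2) ≤ C := by
      have hmul : wt (g n) ^ ((1:ℝ)/2) * wt (g n) ^ (-(1/2 : ℝ)) = 1 := by
        rw [← Real.rpow_add (wt_pos _)]; simp
      have h2 : wt (g n) ^ ((1:ℝ)/2) * 1 ≤ wt (g n) ^ ((1:ℝ)/2) * (C * wt (g n) ^ (-((1:ℝ) / 2))) :=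
        mul_le_mul_of_nonneg_left (by simpa using hle) (Real.rpow_pos_of_pos (wt_pos _) _).le
      calc wt (g n) ^ ((1:ℝ)/2) = wt (g n) ^ ((1:ℝ)/2) * 1 := (mul_one _).symm
        _ ≤ wt (g n) ^ ((1:ℝ)/2) * (C * wt (g n) ^ (-((1:ℝ) / 2))) := h2
        _ = C * (wt (g n) ^ ((1:ℝ)/2) * wt (g n) ^ (-(1/2 : ℝ))) := by ring
        _ = C := by rw [hmul, mul_one]
    have hsq : wt (g n) ≤ C ^ 2 := by
      have := mul_le_mul hx hx (Real.rpow_pos_of_pos (wt_pos _) _).le hCpos.le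
      rwa [← Real.rpow_add (wt_pos _), show (1:ℝ)/2 + 1/2 = 1 by norm_num,
        Real.rpow_one, ← sq] at this
    linarith
  · -- (ii) → (i)
    rintro ⟨C, k, F, hC, hF, hP⟩ u ⟨Cu, N, hCu, hN, hu⟩ hPu
    intro M hM
    obtain ⟨C', hC', hb⟩ := hPu (M + |k|) (by positivity)
    classical
    set D := ∑ ξ ∈ hF.toFinset, ‖u ξ‖ * wt ξ ^ (M / 2) with hD
    have hDnn : 0 ≤ D :=
      Finset.sum_nonneg fun ξ _ =>
        mul_nonneg (norm_nonneg _) (Real.rpow_nonneg (wt_pos _).le _)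
    refine ⟨C' / C + D + 1, by positivity, fun ξ => ?_⟩
    have hwneg : (0:ℝ) < wt ξ ^ (-(M / 2)) := Real.rpow_pos_of_pos (wt_pos ξ) _
    by_cases hξ : ξ ∈ F
    · have hterm : ‖u ξ‖ * wt ξ ^ (M / 2) ≤ D := by
        rw [hD]
        exact Finset.single_le_sum (f := fun ζ => ‖u ζ‖ * wt ζ ^ (M / 2))
          (fun ζ _ => mul_nonneg (norm_nonneg _) (Real.rpow_nonneg (wt_pos _).le _))
          (hF.mem_toFinset.mpr hξ)
      have hmul : wt ξ ^ (M / 2) * wt ξ ^ (-(M / 2)) = 1 := by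
        rw [← Real.rpow_add (wt_pos _)]; simp
      have heq : ‖u ξ‖ = (‖u ξ‖ * wt ξ ^ (M / 2)) * wt ξ ^ (-(M / 2)) := by
        rw [mul_assoc, hmul, mul_one]
      rw [heq]
      apply mul_le_mul_of_nonneg_right _ hwneg.le
      linarith [div_nonneg hC'.le hC.le]
    · have hPξ : C * wt ξ ^ (k / 2) ≤ ‖P ξ‖ := hP ξ hξ
      have hwk : (0:ℝ) < wt ξ ^ (k / 2) := Real.rpow_pos_of_pos (wt_pos ξ) _
      have hPpos : (0:ℝ) < ‖P ξ‖ := lt_of_lt_of_le (mul_pos hC hwk) hPξ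
      have hprod : ‖P ξ‖ * ‖u ξ‖ ≤ C' * wt ξ ^ (-((M + |k|) / 2)) := by
        have := hb ξ
        simpa [norm_mul] using this
      have hlhs : (C * wt ξ ^ (k / 2)) * ‖u ξ‖ ≤ C' * wt ξ ^ (-((M + |k|) / 2)) :=
        le_trans (mul_le_mul_of_nonneg_right hPξ (norm_nonneg _)) hprod
      have hstep : ‖u ξ‖ ≤ (C' * wt ξ ^ (-((M + |k|) / 2))) / (C * wt ξ ^ (k / 2)) := by
        rw [le_div_iff₀ (mul_pos hC hwk)]
        nlinarith [hlhs]
      have hexp : wt ξ ^ (-((M + |k|) / 2)) * (wt ξ ^ (k / 2))⁻¹ ≤ wt ξ ^ (-(M / 2)) := by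
        rw [← Real.rpow_neg (wt_pos _).le (k/2), ← Real.rpow_add (wt_pos _)]
        apply wt_rpow_le
        have : -k ≤ |k| := neg_le_abs k
        linarith [le_abs_self k]
      calc ‖u ξ‖ ≤ (C' * wt ξ ^ (-((M + |k|) / 2))) / (C * wt ξ ^ (k / 2)) := hstep
        _ = (C' / C) * (wt ξ ^ (-((M + |k|) / 2)) / wt ξ ^ (k / 2)) :=
            (div_mul_div_comm C' C (wt ξ ^ (-((M + |k|) / 2))) (wt ξ ^ (k / 2))).symm
        _ = (C' / C) * (wt ξ ^ (-((M + |k|) / 2)) * (wt ξ ^ (k / 2))⁻¹) := by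
            ring
        _ ≤ (C' / C) * wt ξ ^ (-(M / 2)) :=
            mul_le_mul_of_nonneg_left hexp (div_nonneg hC'.le hC.le)
        _ ≤ (C' / C + D + 1) * wt ξ ^ (-(M / 2)) := by
            apply mul_le_mul_of_nonneg_right _ hwneg.le
            linarith
end
end

section
/- Let r, m ≥ 1 and let P₁, …, P_m : ℤ^r → ℂ be the symbols of an overdetermined system of m Fourier multipliers applied to a single unknown on the torus 𝕋^r. Then the following are equivalent: (i) for every u : ℤ^r → ℂ of polynomial growth such that for each 1 ≤ j ≤ m the sequence ξ ↦ P_j(ξ)u(ξ) is rapidly decreasing, u is itself rapidly decreasing; (ii) there exist C > 0, k ∈ ℝ and a finite set F ⊆ ℤ^r such that max_{1 ≤ j ≤ m} |P_j(ξ)| ≥ C(1+‖ξ‖²)^{k/2} for all ξ ∈ ℤ^r \ F. -/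
noncomputable section

open scoped BigOperators

lemma finite_wt_le {r : ℕ} (B : ℝ) : {ξ : Fin r → ℤ | wt ξ ≤ B}.Finite := by
  set c : ℤ := ⌈B⌉
  apply Set.Finite.subset (Set.Finite.pi (fun i : Fin r => Set.finite_Icc (-c) c))
  intro ξ hξ
  simp only [Set.mem_setOf_eq] at hξ
  intro i _
  have hsq : ((ξ i : ℝ))^2 ≤ B - 1 := by
    have : ((ξ i : ℝ))^2 ≤ ∑ j, ((ξ j : ℝ))^2 :=
      Finset.single_le_sum (f := fun j => ((ξ j : ℝ))^2) (fun j _ => sq_nonneg _)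
        (Finset.mem_univ i)
    unfold wt at hξ; linarith
  have hc : ((ξ i)^2 : ℤ) ≤ c := by
    have : ((ξ i : ℝ))^2 ≤ (c : ℝ) := le_trans hsq (by linarith [Int.le_ceil B])
    exact_mod_cast this
  constructor
  · nlinarith [sq_nonneg (ξ i + 1), sq_nonneg (ξ i)]
  · nlinarith [sq_nonneg (ξ i - 1), sq_nonneg (ξ i)]

theorem overdetermined_system_GH_iff (r m : ℕ) (hr : 1 ≤ r) (hm : 1 ≤ m)
    (P : Fin m → (Fin r → ℤ) → ℂ) :
    (∀ u : (Fin r → ℤ) → ℂ, PolyGrowthC u →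
        (∀ j : Fin m, RapidDecayC (fun ξ => P j ξ * u ξ)) → RapidDecayC u) ↔
      (∃ (C : ℝ) (k : ℝ) (F : Set (Fin r → ℤ)), 0 < C ∧ F.Finite ∧
        ∀ ξ, ξ ∉ F →
          Finset.univ.sup' ⟨(⟨0, hm⟩ : Fin m), Finset.mem_univ _⟩ (fun j => ‖P j ξ‖) ≥
            C * wt ξ ^ (k / 2)) := by
  classical
  constructor
  · -- (i) → (ii), by contradiction
    intro H
    by_contra hnot
    push_neg at hnot
    choose ξs hξsF hξs using fun n : ℕ =>
      hnot 1 (-(n : ℝ)) {ξ | wt ξ ≤ (n : ℝ)} one_pos (finite_wt_le _)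
    have hwt : ∀ n : ℕ, (n : ℝ) < wt (ξs n) := by
      intro n
      have := hξsF n
      simp only [Set.mem_setOf_eq] at this
      linarith [not_le.mp this]
    set u : (Fin r → ℤ) → ℂ := fun ξ => if ξ ∈ Set.range ξs then 1 else 0 with hu
    have hunorm : ∀ ξ, ‖u ξ‖ ≤ 1 := by
      intro ξ
      simp only [hu]
      split <;> simp
    have hupg : PolyGrowthC u := by
      refine ⟨1, 1, one_pos, one_pos, fun ξ => ?_⟩
      have h1 : (1:ℝ) ≤ wt ξ ^ ((1:ℝ)/2) :=
        Real.one_le_rpow (one_le_wt ξ) (by norm_num)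
      calc ‖u ξ‖ ≤ 1 := hunorm ξ
        _ ≤ 1 * wt ξ ^ ((1:ℝ)/2) := by linarith
    have hPu : ∀ j : Fin m, RapidDecayC (fun ξ => P j ξ * u ξ) := by
      intro j M hM
      set nM := Nat.ceil M with hnM
      set T : Finset ℝ :=
        insert (1:ℝ) ((Finset.range nM).image
          (fun n => ‖P j (ξs n)‖ * wt (ξs n) ^ (M/2))) with hT
      have hTne : T.Nonempty := ⟨1, Finset.mem_insert_self _ _⟩
      set Cj := T.max' hTne with hCj
      have h1Cj : (1:ℝ) ≤ Cj := Finset.le_max' T 1 (Finset.mem_insert_self _ _)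
      refine ⟨Cj, lt_of_lt_of_le one_pos h1Cj, fun ξ => ?_⟩
      by_cases hmem : ξ ∈ Set.range ξs
      · obtain ⟨n, rfl⟩ := hmem
        have huval : u (ξs n) = 1 := by simp [hu]
        have hPle : ‖P j (ξs n)‖ < wt (ξs n) ^ (-(n : ℝ)/2) := by
          have h1 : ‖P j (ξs n)‖ ≤
              Finset.univ.sup' ⟨(⟨0, hm⟩ : Fin m), Finset.mem_univ _⟩
                (fun j => ‖P j (ξs n)‖) :=
            Finset.le_sup' (fun j => ‖P j (ξs n)‖) (Finset.mem_univ j)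
          have h2 := hξs n
          rw [one_mul] at h2
          exact lt_of_le_of_lt h1 h2
        have hval : ‖P j (ξs n) * u (ξs n)‖ = ‖P j (ξs n)‖ := by
          rw [huval, mul_one]
        rw [hval]
        by_cases hn : (M : ℝ) ≤ (n : ℝ)
        · have hexp : wt (ξs n) ^ (-(n : ℝ)/2) ≤ wt (ξs n) ^ (-(M/2)) := by
            apply Real.rpow_le_rpow_of_exponent_le (one_le_wt _)
            linarith
          have : ‖P j (ξs n)‖ ≤ wt (ξs n) ^ (-(M/2)) := le_trans hPle.le hexp
          calc ‖P j (ξs n)‖ ≤ 1 * wt (ξs n) ^ (-(M/2)) := by rw [one_mul]; exact this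
            _ ≤ Cj * wt (ξs n) ^ (-(M/2)) := by
                apply mul_le_mul_of_nonneg_right h1Cj
                  (Real.rpow_nonneg (wt_pos _).le _)
        · have hnlt : n < nM := by
            rw [hnM]
            exact Nat.lt_ceil.mpr (not_le.mp hn)
          have hmemT : ‖P j (ξs n)‖ * wt (ξs n) ^ (M/2) ∈ T := by
            apply Finset.mem_insert_of_mem
            exact Finset.mem_image_of_mem _ (Finset.mem_range.mpr hnlt)
          have hle : ‖P j (ξs n)‖ * wt (ξs n) ^ (M/2) ≤ Cj :=
            Finset.le_max' T _ hmemT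
          have hpos : (0:ℝ) < wt (ξs n) ^ (M/2) :=
            Real.rpow_pos_of_pos (wt_pos _) _
          have key : ‖P j (ξs n)‖ = (‖P j (ξs n)‖ * wt (ξs n) ^ (M/2)) *
              wt (ξs n) ^ (-(M/2)) := by
            rw [mul_assoc, ← Real.rpow_add (wt_pos _)]
            simp
          rw [key]
          apply mul_le_mul_of_nonneg_right hle (Real.rpow_nonneg (wt_pos _).le _)
      · have h0 : u ξ = 0 := if_neg hmem
        show ‖P j ξ * u ξ‖ ≤ _
        rw [h0, mul_zero, norm_zero]
        exact mul_nonneg (le_trans zero_le_one h1Cj) (Real.rpow_nonneg (wt_pos _).le _)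
    obtain ⟨C', hC', hbd⟩ := H u hupg hPu 2 two_pos
    set n := Nat.ceil C' with hn
    have h1 : ‖u (ξs n)‖ = 1 := by simp [hu]
    have h2 := hbd (ξs n)
    rw [h1] at h2
    have hwn : C' < wt (ξs n) := lt_of_le_of_lt (Nat.le_ceil C') (hwt n)
    have : C' * wt (ξs n) ^ (-(2/2) : ℝ) < 1 := by
      have he : (-(2/2) : ℝ) = -1 := by norm_num
      rw [he, Real.rpow_neg_one, ← div_eq_mul_inv]
      exact (div_lt_one (wt_pos _)).mpr hwn
    linarith
  · -- (ii) → (i)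
    rintro ⟨C, k, F, hC, hF, hP⟩ u hu hPu M hM
    obtain ⟨Cu, N, hCu, hN, hubd⟩ := hu
    set M' := M + |k| + 1 with hM'def
    have hM' : 0 < M' := by
      have := abs_nonneg k
      simp only [hM'def]; linarith
    have hDex : ∀ j : Fin m, ∃ D : ℝ, 0 < D ∧
        ∀ ξ, ‖P j ξ * u ξ‖ ≤ D * wt ξ ^ (-(M'/2)) := fun j => hPu j M' hM'
    choose D hDpos hDbd using hDex
    set D0 := Finset.univ.sup' ⟨(⟨0, hm⟩ : Fin m), Finset.mem_univ _⟩ D with hD0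
    have hD0pos : 0 < D0 :=
      lt_of_lt_of_le (hDpos ⟨0, hm⟩) (Finset.le_sup' D (Finset.mem_univ _))
    -- constant for the finite exceptional set
    set T : Finset ℝ := insert (0:ℝ)
      (hF.toFinset.image (fun ξ => ‖u ξ‖ * wt ξ ^ (M/2))) with hT
    have hTne : T.Nonempty := ⟨0, Finset.mem_insert_self _ _⟩
    set DF := T.max' hTne with hDF
    have hDFnn : 0 ≤ DF := Finset.le_max' T 0 (Finset.mem_insert_self _ _)
    refine ⟨DF + D0 / C + 1, by positivity, fun ξ => ?_⟩
    have hwpow : 0 ≤ wt ξ ^ (-(M/2)) := Real.rpow_nonneg (wt_pos ξ).le _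
    by_cases hmem : ξ ∈ F
    · have hmemT : ‖u ξ‖ * wt ξ ^ (M/2) ∈ T := by
        apply Finset.mem_insert_of_mem
        exact Finset.mem_image_of_mem _ (hF.mem_toFinset.mpr hmem)
      have hle : ‖u ξ‖ * wt ξ ^ (M/2) ≤ DF := Finset.le_max' T _ hmemT
      have key : ‖u ξ‖ = (‖u ξ‖ * wt ξ ^ (M/2)) * wt ξ ^ (-(M/2)) := by
        rw [mul_assoc, ← Real.rpow_add (wt_pos _)]
        simp
      rw [key]
      apply mul_le_mul_of_nonneg_right _ hwpow
      have : 0 < D0 / C := by positivity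
      linarith
    · obtain ⟨j, _, hjeq⟩ := Finset.exists_mem_eq_sup'
        (⟨(⟨0, hm⟩ : Fin m), Finset.mem_univ _⟩ :
          (Finset.univ : Finset (Fin m)).Nonempty)
        (fun j => ‖P j ξ‖)
      have hPj : C * wt ξ ^ (k/2) ≤ ‖P j ξ‖ := by
        have := hP ξ hmem
        rw [hjeq] at this
        exact this
      have hbig : C * wt ξ ^ (k/2) * ‖u ξ‖ ≤ D0 * wt ξ ^ (-(M'/2)) := by
        calc C * wt ξ ^ (k/2) * ‖u ξ‖ ≤ ‖P j ξ‖ * ‖u ξ‖ :=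
              mul_le_mul_of_nonneg_right hPj (norm_nonneg _)
          _ = ‖P j ξ * u ξ‖ := (norm_mul _ _).symm
          _ ≤ D j * wt ξ ^ (-(M'/2)) := hDbd j ξ
          _ ≤ D0 * wt ξ ^ (-(M'/2)) := by
              apply mul_le_mul_of_nonneg_right
                (Finset.le_sup' D (Finset.mem_univ j))
                (Real.rpow_nonneg (wt_pos _).le _)
      have hka : 0 < C * wt ξ ^ (k/2) := by
        have : (0:ℝ) < wt ξ ^ (k/2) := Real.rpow_pos_of_pos (wt_pos _) _
        positivity
      have huu : ‖u ξ‖ ≤ D0 * wt ξ ^ (-(M'/2)) / (C * wt ξ ^ (k/2)) := by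
        rw [le_div_iff₀ hka]
        calc ‖u ξ‖ * (C * wt ξ ^ (k/2)) = C * wt ξ ^ (k/2) * ‖u ξ‖ := by ring
          _ ≤ D0 * wt ξ ^ (-(M'/2)) := hbig
      have heq : D0 * wt ξ ^ (-(M'/2)) / (C * wt ξ ^ (k/2)) =
          (D0 / C) * wt ξ ^ (-(M'/2) - k/2) := by
        rw [Real.rpow_sub (wt_pos ξ)]
        field_simp
      have hexp : wt ξ ^ (-(M'/2) - k/2) ≤ wt ξ ^ (-(M/2)) := by
        apply Real.rpow_le_rpow_of_exponent_le (one_le_wt _)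
        have h1 := le_abs_self k
        have h2 := neg_abs_le k
        simp only [hM'def]
        linarith
      calc ‖u ξ‖ ≤ D0 * wt ξ ^ (-(M'/2)) / (C * wt ξ ^ (k/2)) := huu
        _ = (D0 / C) * wt ξ ^ (-(M'/2) - k/2) := heq
        _ ≤ (D0 / C) * wt ξ ^ (-(M/2)) :=
            mul_le_mul_of_nonneg_left hexp (by positivity)
        _ ≤ (DF + D0 / C + 1) * wt ξ ^ (-(M/2)) := by
            apply mul_le_mul_of_nonneg_right _ hwpow
            linarith
end
end
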